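/- Let f0, f1 be positive real numbers and let p ∈ [0,1]. Define p' = f1·p / (f1·p + f0·(1−p)). Then p'·(1−p') ≥ p·(1−p)·exp(−|ln(f1/f0)|). -/

import Mathlib

/-- Single-step posterior-variance contraction bound: if `p' = f1·p / (f1·p + f0·(1−p))`
is the Bayes posterior obtained from prior `p` and positive likelihoods `f1, f0`, then
`p'·(1−p') ≥ p·(1−p)·exp(−|ln(f1/f0)|)`. -/
theorem stmt_0 (f0 f1 p : ℝ) (hf0 : 0 < f0) (hf1 : 0 < f1)
    (hp : p ∈ Set.Icc (0 : ℝ) 1) :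
    (f1 * p / (f1 * p + f0 * (1 - p))) * (1 - f1 * p / (f1 * p + f0 * (1 - p)))
      ≥ p * (1 - p) * Real.exp (-|Real.log (f1 / f0)|) := by
  obtain ⟨hp0, hp1⟩ := hp
  have h1p : 0 ≤ 1 - p := by linarith
  have hDpos : 0 < f1 * p + f0 * (1 - p) := by
    rcases eq_or_lt_of_le hp0 with h | h
    · simp [← h]; nlinarith
    · nlinarith [mul_pos hf1 h, mul_nonneg hf0.le h1p]
  have hM : 0 < max f1 f0 := lt_max_of_lt_left hf1
  have hexp : Real.exp (-|Real.log (f1 / f0)|) = f1 * f0 / (max f1 f0) ^ 2 := by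
    rcases le_total f0 f1 with h | h
    · rw [abs_of_nonneg (Real.log_nonneg (by rw [le_div_iff₀ hf0]; linarith)),
        ← Real.log_inv, Real.exp_log (by positivity), max_eq_left h]
      field_simp
    · rw [abs_of_nonpos (Real.log_nonpos (by positivity) (by rw [div_le_one hf0]; linarith)),
        neg_neg, Real.exp_log (by positivity), max_eq_right h]
      field_simp
  have h2 : 1 - f1 * p / (f1 * p + f0 * (1 - p)) = f0 * (1 - p) / (f1 * p + f0 * (1 - p)) := by
    field_simp
    ring
  rw [hexp, h2, ge_iff_le, div_mul_div_comm, ← mul_div_assoc,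
    div_le_div_iff₀ (by positivity) (by positivity)]
  have hle : f1 * p + f0 * (1 - p) ≤ max f1 f0 := by
    have := le_max_left f1 f0
    have := le_max_right f1 f0
    nlinarith
  nlinarith [mul_nonneg hp0 h1p, mul_nonneg (mul_nonneg hf1.le hf0.le) (mul_nonneg hp0 h1p),
    mul_self_nonneg (f1 * p + f0 * (1 - p)), hDpos.le, sq_nonneg (f1 * p + f0 * (1 - p)),
    mul_le_mul hle hle hDpos.le hM.le]
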